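/- Fix M > 0 and let φ₁ denote the density of the standard normal distribution. Then there exist C > 0 and ε₀ > 0 such that for all 0 < ε < ε₀ and all a ∈ ℝ with |a| ≤ M: | ε^{−1/2} ( ∫_{{z : az ≤ 0}} z e^{−a √ε z} φ₁(z) dz + ∫_{{z : az > 0}} z φ₁(z) dz ) + a/2 | ≤ C √ε. -/

import Mathlib

open MeasureTheory

/-- Density of the standard normal distribution. -/
noncomputable def stdGaussDensity (z : ℝ) : ℝ :=
  (Real.sqrt (2 * Real.pi))⁻¹ * Real.exp (-z ^ 2 / 2)


open MeasureTheory Real Set Filter Topology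


namespace GaussDrift

lemma sg_eq : stdGaussDensity = fun z =>
    (Real.sqrt (2 * Real.pi))⁻¹ * Real.exp (-(1/2 : ℝ) * z ^ 2) := by
  funext z; simp only [stdGaussDensity]; ring_nf

lemma sg_nonneg (z : ℝ) : 0 ≤ stdGaussDensity z :=
  mul_nonneg (inv_nonneg.mpr (Real.sqrt_nonneg _)) (Real.exp_nonneg _)

lemma sqrt_two_pi_ge_one : (1:ℝ) ≤ Real.sqrt (2 * Real.pi) := by
  rw [show (1:ℝ) = Real.sqrt 1 by simp]
  exact Real.sqrt_le_sqrt (by nlinarith [Real.pi_gt_three])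

lemma sg_le_one (z : ℝ) : stdGaussDensity z ≤ 1 := by
  have h1 : Real.exp (-z ^ 2 / 2) ≤ 1 := Real.exp_le_one_iff.mpr (by nlinarith [sq_nonneg z])
  have h2 : (Real.sqrt (2 * Real.pi))⁻¹ ≤ 1 := by
    exact inv_le_one_of_one_le₀ sqrt_two_pi_ge_one
  calc stdGaussDensity z ≤ (Real.sqrt (2 * Real.pi))⁻¹ * 1 := by
        exact mul_le_mul_of_nonneg_left h1 (by positivity)
    _ ≤ 1 := by simpa using h2

lemma integrable_sg : Integrable stdGaussDensity := by
  rw [sg_eq]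
  exact (integrable_exp_neg_mul_sq (by norm_num : (0:ℝ) < 1/2)).const_mul _

lemma integrable_id_sg : Integrable (fun z => z * stdGaussDensity z) := by
  have h : (fun z : ℝ => z * stdGaussDensity z)
      = fun z => (Real.sqrt (2 * Real.pi))⁻¹ * (z * Real.exp (-(1/2 : ℝ) * z ^ 2)) := by
    funext z; rw [sg_eq]; ring
  rw [h]
  exact (integrable_mul_exp_neg_mul_sq (by norm_num : (0:ℝ) < 1/2)).const_mul _

lemma integral_sg : ∫ z, stdGaussDensity z = 1 := by
  rw [sg_eq, integral_const_mul, integral_gaussian]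
  rw [show (π / (1/2)) = 2 * π by ring]
  rw [inv_mul_cancel₀]
  positivity

lemma hasDerivAt_neg_sg (z : ℝ) :
    HasDerivAt (fun z => -stdGaussDensity z) (z * stdGaussDensity z) z := by
  have h0 : HasDerivAt (fun z : ℝ => z ^ 2) (2 * z) z := by
    simpa using hasDerivAt_pow 2 z
  have h : HasDerivAt (fun z : ℝ => -z ^ 2 / 2) (-z) z := by
    have := (h0.neg).div_const 2
    exact this.congr_deriv (by ring)
  have h3 := ((h.exp).const_mul ((Real.sqrt (2 * Real.pi))⁻¹)).neg
  exact h3.congr_deriv (by simp only [stdGaussDensity]; ring)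

lemma tendsto_sq_atTop_top : Tendsto (fun z : ℝ => -z ^ 2 / 2) atTop atBot := by
  have h1 : Tendsto (fun z : ℝ => z ^ 2) atTop atTop :=
    tendsto_pow_atTop (by norm_num : (2:ℕ) ≠ 0)
  have h2 : Tendsto (fun z : ℝ => -z ^ 2) atTop atBot := by
    simpa [Function.comp] using tendsto_neg_atTop_atBot.comp h1
  exact h2.atBot_div_const (by norm_num)

lemma tendsto_sq_atTop_bot : Tendsto (fun z : ℝ => -z ^ 2 / 2) atBot atBot := by
  have := tendsto_sq_atTop_top.comp Filter.tendsto_neg_atBot_atTop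
  simp only [Function.comp_def, neg_sq] at this
  exact this

lemma tendsto_sg_atBot : Tendsto (fun z => -stdGaussDensity z) atBot (𝓝 0) := by
  have := (Real.tendsto_exp_atBot.comp tendsto_sq_atTop_bot).const_mul
    ((Real.sqrt (2 * Real.pi))⁻¹)
  simpa [stdGaussDensity, Function.comp] using this.neg

lemma tendsto_sg_atTop : Tendsto (fun z => -stdGaussDensity z) atTop (𝓝 0) := by
  have := (Real.tendsto_exp_atBot.comp tendsto_sq_atTop_top).const_mul
    ((Real.sqrt (2 * Real.pi))⁻¹)
  simpa [stdGaussDensity, Function.comp] using this.neg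

lemma integral_Iic_id_sg (c : ℝ) :
    ∫ z in Iic c, z * stdGaussDensity z = -stdGaussDensity c := by
  rw [integral_Iic_of_hasDerivAt_of_tendsto' (m := 0) (f := fun z => -stdGaussDensity z)
    (fun x _ => hasDerivAt_neg_sg x) integrable_id_sg.integrableOn tendsto_sg_atBot]
  ring

lemma integral_Ioi_id_sg (c : ℝ) :
    ∫ z in Ioi c, z * stdGaussDensity z = stdGaussDensity c := by
  rw [integral_Ioi_of_hasDerivAt_of_tendsto' (m := 0) (f := fun z => -stdGaussDensity z)
    (fun x _ => hasDerivAt_neg_sg x) integrable_id_sg.integrableOn tendsto_sg_atTop]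
  ring

lemma integral_id_sg : ∫ z, z * stdGaussDensity z = 0 := by
  rw [← intervalIntegral.integral_Iic_add_Ioi (b := 0) integrable_id_sg.integrableOn
    integrable_id_sg.integrableOn, integral_Iic_id_sg, integral_Ioi_id_sg]
  ring

lemma Phi_le_one (b : ℝ) : ∫ z in Iic b, stdGaussDensity z ≤ 1 := by
  rw [← integral_sg]
  exact setIntegral_le_integral integrable_sg (Eventually.of_forall sg_nonneg)

lemma Phi_zero : ∫ z in Iic (0:ℝ), stdGaussDensity z = 1/2 := by
  have hsymm : ∫ z in Iic (0:ℝ), stdGaussDensity z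
      = ∫ z in Ioi (0:ℝ), stdGaussDensity z := by
    have h := integral_comp_neg_Iic (0:ℝ) stdGaussDensity
    have heven : ∀ x : ℝ, stdGaussDensity (-x) = stdGaussDensity x := by
      intro x; simp [stdGaussDensity, neg_sq]
    simp only [heven, neg_zero] at h
    exact h
  have hsum := intervalIntegral.integral_Iic_add_Ioi (b := (0:ℝ)) integrable_sg.integrableOn
    integrable_sg.integrableOn
  rw [integral_sg] at hsum
  linarith

lemma Phi_bound {b : ℝ} (hb : 0 ≤ b) :
    1/2 ≤ (∫ z in Iic b, stdGaussDensity z) ∧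
      (∫ z in Iic b, stdGaussDensity z) ≤ 1/2 + b := by
  have hsplit : ∫ z in Iic b, stdGaussDensity z
      = (∫ z in Iic (0:ℝ), stdGaussDensity z) + ∫ z in Ioc (0:ℝ) b, stdGaussDensity z := by
    rw [← setIntegral_union (Iic_disjoint_Ioc le_rfl) measurableSet_Ioc
      integrable_sg.integrableOn integrable_sg.integrableOn, Iic_union_Ioc_eq_Iic hb]
  have h0 : 0 ≤ ∫ z in Ioc (0:ℝ) b, stdGaussDensity z :=
    setIntegral_nonneg measurableSet_Ioc fun x _ => sg_nonneg x
  have h1 : (∫ z in Ioc (0:ℝ) b, stdGaussDensity z) ≤ b := by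
    have hle : (∫ z in Ioc (0:ℝ) b, stdGaussDensity z)
        ≤ ∫ _ in Ioc (0:ℝ) b, (1:ℝ) := by
      apply setIntegral_mono_on integrable_sg.integrableOn
        (integrableOn_const measure_Ioc_lt_top.ne)
        measurableSet_Ioc
      exact fun x _ => sg_le_one x
    rw [setIntegral_const] at hle
    simpa [Real.volume_Ioc, ENNReal.toReal_ofReal hb, max_eq_left hb] using hle
  rw [hsplit, Phi_zero]
  constructor <;> linarith

end GaussDrift

namespace GaussDrift

lemma setIntegral_shift (g : ℝ → ℝ) (b : ℝ) :
    ∫ z in Iic (0:ℝ), g (z + b) = ∫ w in Iic b, g w := by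
  have A : MeasurableEmbedding (fun x : ℝ => x + b) :=
    (Homeomorph.addRight b).isClosedEmbedding.measurableEmbedding
  have h := A.setIntegral_map (μ := volume) g (Iic b)
  rw [map_add_right_eq_self volume b] at h
  have hset : (fun x : ℝ => x + b) ⁻¹' Iic b = Iic 0 := by
    ext z; simp
  rw [hset] at h
  exact h.symm

lemma setIntegral_neg_sub (g : ℝ → ℝ) (s : Set ℝ) :
    ∫ z in s, g z = ∫ z in (fun z : ℝ => -z) ⁻¹' s, g (-z) := by
  have A : MeasurableEmbedding (fun x : ℝ => -x) :=
    (Homeomorph.neg ℝ).isClosedEmbedding.measurableEmbedding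
  conv_lhs => rw [← Measure.map_neg_eq_self (volume : Measure ℝ)]
  exact A.setIntegral_map (μ := volume) g s

lemma exp_sq_sg (b : ℝ) :
    Real.exp (b ^ 2 / 2) * stdGaussDensity b = stdGaussDensity 0 := by
  simp only [stdGaussDensity]
  rw [show -(0:ℝ) ^ 2 / 2 = 0 by norm_num, Real.exp_zero, mul_one,
    mul_comm ((Real.sqrt (2 * Real.pi))⁻¹), ← mul_assoc, ← Real.exp_add,
    show b ^ 2 / 2 + -b ^ 2 / 2 = 0 by ring, Real.exp_zero, one_mul]

lemma I_pos (b : ℝ) :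
    (∫ z in Iic (0:ℝ), z * Real.exp (-(b * z)) * stdGaussDensity z)
      + ∫ z in Ioi (0:ℝ), z * stdGaussDensity z
    = -(b * Real.exp (b ^ 2 / 2) * ∫ z in Iic b, stdGaussDensity z) := by
  have h1 : ∀ z : ℝ, z * Real.exp (-(b * z)) * stdGaussDensity z
      = Real.exp (b ^ 2 / 2) * ((z + b - b) * stdGaussDensity (z + b)) := by
    intro z
    simp only [stdGaussDensity]
    have h : Real.exp (-(b * z)) * Real.exp (-z ^ 2 / 2)
        = Real.exp (b ^ 2 / 2) * Real.exp (-(z + b) ^ 2 / 2) := by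
      rw [← Real.exp_add, ← Real.exp_add]; congr 1; ring
    linear_combination (z * (Real.sqrt (2 * Real.pi))⁻¹) * h
  have step1 : (∫ z in Iic (0:ℝ), z * Real.exp (-(b * z)) * stdGaussDensity z)
      = Real.exp (b ^ 2 / 2) * ∫ w in Iic b, (w - b) * stdGaussDensity w := by
    simp only [h1]
    rw [integral_const_mul]
    congr 1
    exact setIntegral_shift (fun w => (w - b) * stdGaussDensity w) b
  have step2 : (∫ w in Iic b, (w - b) * stdGaussDensity w)
      = -stdGaussDensity b - b * ∫ z in Iic b, stdGaussDensity z := by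
    have hsub : ∀ w : ℝ, (w - b) * stdGaussDensity w
        = w * stdGaussDensity w - b * stdGaussDensity w := fun w => by ring
    simp only [hsub]
    rw [integral_sub integrable_id_sg.integrableOn
      ((integrable_sg.const_mul b).integrableOn), integral_Iic_id_sg, integral_const_mul]
  have h2 := exp_sq_sg b
  rw [step1, step2, integral_Ioi_id_sg]
  have : stdGaussDensity 0 = Real.exp (b ^ 2 / 2) * stdGaussDensity b := h2.symm
  rw [this]
  ring

lemma est_aux {b Φ E : ℝ} (hb0 : 0 ≤ b) (hb1 : b ≤ 1) (hΦl : 1/2 ≤ Φ)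
    (hΦu : Φ ≤ 1/2 + b) (hΦ1 : Φ ≤ 1) (hE1 : 1 ≤ E)
    (hkey : (1 - b ^ 2 / 2) * E ≤ 1) : |1/2 - E * Φ| ≤ 2 * b := by
  have hbb : b ^ 2 ≤ b := by nlinarith
  have hE2 : E ≤ 2 := by nlinarith [mul_nonneg (by nlinarith : (0:ℝ) ≤ 1 - b ^ 2) (by linarith : (0:ℝ) ≤ E)]
  have hEb : E ≤ 1 + b := by nlinarith [mul_nonneg (by linarith : (0:ℝ) ≤ 2 - E) (sq_nonneg b)]
  have hup : E * Φ ≤ 1/2 + 2 * b := by nlinarith [mul_nonneg (by linarith : (0:ℝ) ≤ E - 1) (by linarith : (0:ℝ) ≤ Φ)]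
  have hlo : 1/2 ≤ E * Φ := by nlinarith
  rw [abs_le]
  constructor <;> nlinarith

lemma est {b : ℝ} (hb0 : 0 ≤ b) (hb1 : b ≤ 1) :
    |1/2 - Real.exp (b ^ 2 / 2) * ∫ z in Iic b, stdGaussDensity z| ≤ 2 * b := by
  obtain ⟨hΦl, hΦu⟩ := Phi_bound hb0
  have hEpos : 0 < Real.exp (b ^ 2 / 2) := Real.exp_pos _
  have hkey : (1 - b ^ 2 / 2) * Real.exp (b ^ 2 / 2) ≤ 1 := by
    have h := Real.add_one_le_exp (-(b ^ 2 / 2))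
    rw [Real.exp_neg] at h
    have := mul_le_mul_of_nonneg_right h hEpos.le
    rwa [inv_mul_cancel₀ hEpos.ne', show -(b ^ 2 / 2) + 1 = 1 - b ^ 2 / 2 by ring] at this
  exact est_aux hb0 hb1 hΦl hΦu (Phi_le_one b)
    (Real.one_le_exp (by positivity)) hkey

end GaussDrift

namespace GaussDrift

lemma sg_even (x : ℝ) : stdGaussDensity (-x) = stdGaussDensity x := by
  simp [stdGaussDensity, neg_sq]

lemma flip (s a : ℝ) :
    (∫ z in {z : ℝ | a * z ≤ 0}, z * Real.exp (-(a * s * z)) * stdGaussDensity z)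
      + ∫ z in {z : ℝ | 0 < a * z}, z * stdGaussDensity z
    = -((∫ z in {z : ℝ | -a * z ≤ 0}, z * Real.exp (-(-a * s * z)) * stdGaussDensity z)
      + ∫ z in {z : ℝ | 0 < -a * z}, z * stdGaussDensity z) := by
  have h1 := setIntegral_neg_sub
    (fun z => z * Real.exp (-(-a * s * z)) * stdGaussDensity z) {z : ℝ | -a * z ≤ 0}
  have h2 := setIntegral_neg_sub (fun z => z * stdGaussDensity z) {z : ℝ | 0 < -a * z}
  have hs1 : (fun z : ℝ => -z) ⁻¹' {z : ℝ | -a * z ≤ 0} = {z : ℝ | a * z ≤ 0} := by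
    ext z; simp only [Set.mem_preimage, Set.mem_setOf_eq]
    constructor <;> intro h <;> nlinarith
  have hs2 : (fun z : ℝ => -z) ⁻¹' {z : ℝ | 0 < -a * z} = {z : ℝ | 0 < a * z} := by
    ext z; simp only [Set.mem_preimage, Set.mem_setOf_eq]
    constructor <;> intro h <;> nlinarith
  rw [hs1] at h1
  rw [hs2] at h2
  have hf1 : ∀ z : ℝ, (-z) * Real.exp (-(-a * s * -z)) * stdGaussDensity (-z)
      = -(z * Real.exp (-(a * s * z)) * stdGaussDensity z) := by
    intro z
    rw [show (-(-a * s * -z)) = -(a * s * z) by ring, sg_even]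
    ring
  simp only [hf1] at h1
  have hf2 : ∀ z : ℝ, (-z) * stdGaussDensity (-z) = -(z * stdGaussDensity z) := by
    intro z; rw [sg_even]; ring
  simp only [hf2] at h2
  rw [integral_neg] at h1
  rw [integral_neg] at h2
  rw [h1, h2]
  ring

end GaussDrift


open Real Set Filter Topology GaussDrift

/-- Core Gaussian first-moment (drift) computation: uniformly in `|a| ≤ M`,
`ε^{−1/2}(∫_{az≤0} z e^{−a√ε z} φ₁(z) dz + ∫_{az>0} z φ₁(z) dz) = −a/2 + O(√ε)`. -/
theorem gaussian_drift_integral (M : ℝ) (hM : 0 < M) :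
    ∃ C > (0:ℝ), ∃ ε₀ > (0:ℝ), ∀ ε a : ℝ, 0 < ε → ε < ε₀ → |a| ≤ M →
      |(Real.sqrt ε)⁻¹ *
          ((∫ z in {z : ℝ | a * z ≤ 0},
              z * Real.exp (-(a * Real.sqrt ε * z)) * stdGaussDensity z)
            + ∫ z in {z : ℝ | 0 < a * z}, z * stdGaussDensity z)
        + a / 2|
        ≤ C * Real.sqrt ε := by
  refine ⟨2 * M ^ 2 + 1, by positivity, min 1 (1 / M ^ 2),
    lt_min one_pos (by positivity), ?_⟩
  intro ε a hε hεlt haM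
  have hsε : 0 < Real.sqrt ε := Real.sqrt_pos.mpr hε
  have hsle : M * Real.sqrt ε ≤ 1 := by
    have h1 : ε ≤ 1 / M ^ 2 := le_of_lt (lt_of_lt_of_le hεlt (min_le_right _ _))
    have h2 := Real.sqrt_le_sqrt h1
    rw [show (1 / M ^ 2 : ℝ) = (1 / M) ^ 2 by ring,
      Real.sqrt_sq (by positivity)] at h2
    calc M * Real.sqrt ε ≤ M * (1 / M) := by nlinarith
      _ = 1 := by field_simp
  have key : ∀ c : ℝ, 0 < c → c ≤ M →
      |(Real.sqrt ε)⁻¹ *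
          ((∫ z in {z : ℝ | c * z ≤ 0},
              z * Real.exp (-(c * Real.sqrt ε * z)) * stdGaussDensity z)
            + ∫ z in {z : ℝ | 0 < c * z}, z * stdGaussDensity z)
        + c / 2| ≤ (2 * M ^ 2 + 1) * Real.sqrt ε := by
    intro c hc hcM
    have hset1 : {z : ℝ | c * z ≤ 0} = Iic 0 := by
      ext z; simp only [mem_setOf_eq, mem_Iic]
      constructor <;> intro h <;> nlinarith
    have hset2 : {z : ℝ | 0 < c * z} = Ioi 0 := by
      ext z; simp only [mem_setOf_eq, mem_Ioi]
      constructor <;> intro h <;> nlinarith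
    set b := c * Real.sqrt ε with hb
    have hb0 : 0 ≤ b := by positivity
    have hb1 : b ≤ 1 := by
      have : c * Real.sqrt ε ≤ M * Real.sqrt ε := by nlinarith
      linarith
    rw [hset1, hset2, I_pos b]
    have hrw : (Real.sqrt ε)⁻¹ *
          -(b * Real.exp (b ^ 2 / 2) * ∫ z in Iic b, stdGaussDensity z) + c / 2
        = c * (1/2 - Real.exp (b ^ 2 / 2) * ∫ z in Iic b, stdGaussDensity z) := by
      rw [hb]
      field_simp
      ring
    rw [hrw, abs_mul]
    have hest := est hb0 hb1
    calc |c| * |1/2 - Real.exp (b ^ 2 / 2) * ∫ z in Iic b, stdGaussDensity z|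
        ≤ M * (2 * b) := by
          apply mul_le_mul (by rw [abs_of_pos hc]; exact hcM) hest (abs_nonneg _) hM.le
      _ = 2 * (c * M) * Real.sqrt ε := by rw [hb]; ring
      _ ≤ (2 * M ^ 2 + 1) * Real.sqrt ε := by
          have h : 2 * (c * M) ≤ 2 * M ^ 2 + 1 := by nlinarith
          exact mul_le_mul_of_nonneg_right h hsε.le
  rcases lt_trichotomy a 0 with hneg | rfl | hpos
  · have h := key (-a) (by linarith) (by rw [abs_of_neg hneg] at haM; linarith)
    rw [flip (Real.sqrt ε) a]
    have hrw : (Real.sqrt ε)⁻¹ *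
          -((∫ z in {z : ℝ | -a * z ≤ 0},
              z * Real.exp (-(-a * Real.sqrt ε * z)) * stdGaussDensity z)
            + ∫ z in {z : ℝ | 0 < -a * z}, z * stdGaussDensity z) + a / 2
        = -((Real.sqrt ε)⁻¹ *
          ((∫ z in {z : ℝ | -a * z ≤ 0},
              z * Real.exp (-(-a * Real.sqrt ε * z)) * stdGaussDensity z)
            + ∫ z in {z : ℝ | 0 < -a * z}, z * stdGaussDensity z) + -a / 2) := by
      ring
    rw [hrw, abs_neg]
    exact h
  · have hs1 : {z : ℝ | (0:ℝ) * z ≤ 0} = Set.univ := by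
      ext z; simp
    have hs2 : {z : ℝ | 0 < (0:ℝ) * z} = (∅ : Set ℝ) := by
      ext z; simp
    rw [hs1, hs2]
    simp only [zero_mul, neg_zero, Real.exp_zero, mul_one, Measure.restrict_univ,
      Measure.restrict_empty, integral_zero_measure, integral_id_sg]
    norm_num
    positivity
  · exact key a hpos (by rwa [abs_of_pos hpos] at haM)
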